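/- Every sectionally complemented lattice is congruence splitting. -/

import Mathlib

/-- A lattice congruence on `L`: an equivalence relation compatible with `⊔` and `⊓`. -/
structure LatticeCon' (L : Type*) [Lattice L] where
  r : L → L → Prop
  refl : ∀ x, r x x
  symm : ∀ {x y}, r x y → r y x
  trans : ∀ {x y z}, r x y → r y z → r x z
  sup : ∀ {a b c d}, r a b → r c d → r (a ⊔ c) (b ⊔ d)
  inf : ∀ {a b c d}, r a b → r c d → r (a ⊓ c) (b ⊓ d)

namespace LatticeCon'
variable {L : Type*} [Lattice L]

instance : PartialOrder (LatticeCon' L) where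
  le θ φ := ∀ x y, θ.r x y → φ.r x y
  le_refl θ := fun _ _ h => h
  le_trans θ φ ψ h1 h2 := fun x y h => h2 x y (h1 x y h)
  le_antisymm θ φ h1 h2 := by
    cases θ; cases φ
    simp only [LatticeCon'.mk.injEq]
    funext x y
    exact propext ⟨h1 x y, h2 x y⟩

instance : InfSet (LatticeCon' L) where
  sInf S :=
  { r := fun x y => ∀ θ ∈ S, θ.r x y
    refl := fun x θ _ => θ.refl x
    symm := fun h θ hθ => θ.symm (h θ hθ)
    trans := fun h1 h2 θ hθ => θ.trans (h1 θ hθ) (h2 θ hθ)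
    sup := fun h1 h2 θ hθ => θ.sup (h1 θ hθ) (h2 θ hθ)
    inf := fun h1 h2 θ hθ => θ.inf (h1 θ hθ) (h2 θ hθ) }

instance : CompleteLattice (LatticeCon' L) :=
  completeLatticeOfInf _ (fun _ =>
    ⟨fun θ hθ _ _ h => h θ hθ, fun _ hφ _ _ h θ hθ => hφ hθ _ _ h⟩)

end LatticeCon'

/-- `theta a b` is the principal congruence generated by the pair `(a, b)`. -/
def theta {L : Type*} [Lattice L] (a b : L) : LatticeCon' L :=
  sInf {θ : LatticeCon' L | θ.r a b}

/-- `thetaPlus a b = Θ⁺(a,b) = Θ(a ⊓ b, a)`, the least congruence collapsing `a` below `b`. -/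
def thetaPlus {L : Type*} [Lattice L] (a b : L) : LatticeCon' L :=
  theta (a ⊓ b) a

/-- Every sectionally complemented lattice is congruence splitting. -/
theorem sectionallyComplemented_congruenceSplitting {L : Type*} [Lattice L] [OrderBot L]
    (hsec : ∀ a b : L, a ≤ b → ∃ c : L, a ⊓ c = ⊥ ∧ a ⊔ c = b) :
    ∀ a b : L, a ≤ b → ∀ α₀ α₁ : LatticeCon' L, theta a b = α₀ ⊔ α₁ →
      ∃ x₀ ∈ Set.Icc a b, ∃ x₁ ∈ Set.Icc a b,
        x₀ ⊔ x₁ = b ∧ theta a x₀ ≤ α₀ ∧ theta a x₁ ≤ α₁ := by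
  intro a b hab α₀ α₁ hθeq
  obtain ⟨c, hac, hbc⟩ := hsec a b hab
  have hcb : c ≤ b := hbc ▸ le_sup_right
  set R : L → L → Prop := fun u v => α₀.r u v ∨ α₁.r u v with hR
  -- helper lemmas for chains
  have hchain_supr : ∀ {x y : L} (u : L), Relation.ReflTransGen R x y →
      Relation.ReflTransGen R (x ⊔ u) (y ⊔ u) := by
    intro x y u h
    induction h with
    | refl => exact .refl
    | tail _ hs ih =>
        exact ih.tail (hs.imp (fun h => α₀.sup h (α₀.refl u))
          (fun h => α₁.sup h (α₁.refl u)))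
  have hchain_supl : ∀ {x y : L} (u : L), Relation.ReflTransGen R x y →
      Relation.ReflTransGen R (u ⊔ x) (u ⊔ y) := by
    intro x y u h
    induction h with
    | refl => exact .refl
    | tail _ hs ih =>
        exact ih.tail (hs.imp (fun h => α₀.sup (α₀.refl u) h)
          (fun h => α₁.sup (α₁.refl u) h))
  have hchain_infr : ∀ {x y : L} (u : L), Relation.ReflTransGen R x y →
      Relation.ReflTransGen R (x ⊓ u) (y ⊓ u) := by
    intro x y u h
    induction h with
    | refl => exact .refl
    | tail _ hs ih =>
        exact ih.tail (hs.imp (fun h => α₀.inf h (α₀.refl u))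
          (fun h => α₁.inf h (α₁.refl u)))
  have hchain_infl : ∀ {x y : L} (u : L), Relation.ReflTransGen R x y →
      Relation.ReflTransGen R (u ⊓ x) (u ⊓ y) := by
    intro x y u h
    induction h with
    | refl => exact .refl
    | tail _ hs ih =>
        exact ih.tail (hs.imp (fun h => α₀.inf (α₀.refl u) h)
          (fun h => α₁.inf (α₁.refl u) h))
  have hRsymm : Symmetric R := fun _ _ h => h.imp α₀.symm α₁.symm
  -- the join congruence as a transitive chain closure
  let γ : LatticeCon' L :=
  { r := Relation.ReflTransGen R
    refl := fun _ => .refl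
    symm := fun h => by haveI : Std.Symm R := ⟨fun a b => @hRsymm a b⟩; exact Std.Symm.symm _ _ h
    trans := fun h1 h2 => h1.trans h2
    sup := fun h1 h2 => (hchain_supr _ h1).trans (hchain_supl _ h2)
    inf := fun h1 h2 => (hchain_infr _ h1).trans (hchain_infl _ h2) }
  have hle : α₀ ⊔ α₁ ≤ γ := by
    apply sup_le
    · exact fun x y h => Relation.ReflTransGen.single (Or.inl h)
    · exact fun x y h => Relation.ReflTransGen.single (Or.inr h)
  -- (⊥, c) is in the join
  have hrab : (theta a b).r a b := fun θ hθ => hθ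
  rw [hθeq] at hrab
  have hbotc : (α₀ ⊔ α₁).r ⊥ c := by
    have h := (α₀ ⊔ α₁).inf hrab ((α₀ ⊔ α₁).refl c)
    rwa [hac, inf_eq_right.mpr hcb] at h
  have hγc : Relation.ReflTransGen R ⊥ c := hle ⊥ c hbotc
  -- main induction: extract complements along the chain
  have key : ∀ y : L, Relation.ReflTransGen R ⊥ y →
      ∃ j d₀ d₁ : L, y ≤ j ∧ α₀.r ⊥ d₀ ∧ α₁.r ⊥ d₁ ∧ d₀ ⊔ d₁ = j ⊓ c := by
    intro y hy
    induction hy with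
    | refl => exact ⟨⊥, ⊥, ⊥, le_rfl, α₀.refl ⊥, α₁.refl ⊥, by simp⟩
    | @tail p q hp hstep ih =>
        obtain ⟨j, d₀, d₁, hpj, h0, h1, hd⟩ := ih
        refine ?_
        have hjj' : ∀ (α : LatticeCon' L), α.r p q → α.r j (j ⊔ q) := by
          intro α h
          have h' := α.sup (α.refl j) h
          rwa [sup_eq_left.mpr hpj] at h'
        have hww' : ∀ (α : LatticeCon' L), α.r p q → α.r (j ⊓ c) ((j ⊔ q) ⊓ c) :=
          fun α h => α.inf (hjj' α h) (α.refl c)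
        have hwle : j ⊓ c ≤ (j ⊔ q) ⊓ c := inf_le_inf_right c le_sup_left
        obtain ⟨d, hd1, hd2⟩ := hsec (j ⊓ c) ((j ⊔ q) ⊓ c) hwle
        have hdle : d ≤ (j ⊔ q) ⊓ c := hd2 ▸ le_sup_right
        have h0d : ∀ (α : LatticeCon' L), α.r p q → α.r ⊥ d := by
          intro α h
          have h' := α.inf (hww' α h) (α.refl d)
          rwa [hd1, inf_eq_right.mpr hdle] at h'
        rcases hstep with h | h
        · refine ⟨j ⊔ q, d₀ ⊔ d, d₁, le_sup_right, ?_, h1, ?_⟩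
          · have h' := α₀.sup h0 (h0d α₀ h)
            simpa using h'
          · rw [sup_right_comm, hd, hd2]
        · refine ⟨j ⊔ q, d₀, d₁ ⊔ d, le_sup_right, h0, ?_, ?_⟩
          · have h' := α₁.sup h1 (h0d α₁ h)
            simpa using h'
          · rw [← sup_assoc, hd, hd2]
  obtain ⟨j, d₀, d₁, hcj, h0, h1, hd⟩ := key c hγc
  rw [inf_eq_right.mpr hcj] at hd
  have hd₀c : d₀ ≤ c := hd ▸ le_sup_left
  have hd₁c : d₁ ≤ c := hd ▸ le_sup_right
  refine ⟨a ⊔ d₀, ⟨le_sup_left, sup_le hab (hd₀c.trans hcb)⟩,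
          a ⊔ d₁, ⟨le_sup_left, sup_le hab (hd₁c.trans hcb)⟩, ?_, ?_, ?_⟩
  · rw [sup_sup_sup_comm, sup_idem, hd, hbc]
  · have h' : α₀.r a (a ⊔ d₀) := by have := α₀.sup (α₀.refl a) h0; simpa using this
    exact fun x y hxy => hxy α₀ h'
  · have h' : α₁.r a (a ⊔ d₁) := by have := α₁.sup (α₁.refl a) h1; simpa using this
    exact fun x y hxy => hxy α₁ h'
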